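/- Let M = (E, p) be a valuated matroid of rank r with basis valuation p : binom(E, r) → ℝ ∪ {∞}, and let w ∈ ℝ^E. Then the collection in_w B(M) of r-subsets B minimizing p(B) − ∑_{e ∈ B} w_e satisfies the basis exchange axiom; that is, in_w B(M) is the set of bases of a matroid on E. -/

import Mathlib

/-- A valuated matroid of rank `r` on a finite ground set `E`, with values in `ℝ ∪ {∞}`:
a basis valuation function `p` on `binom(E,r)` (encoded as a function on all finsets which
is `∞` away from `r`-sets), not identically `∞`, satisfying the valuated basis exchange
axiom. -/
structure ValuatedMatroid (E : Type*) [DecidableEq E] [Fintype E] (r : ℕ) where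
  p : Finset E → WithTop ℝ
  card_of_ne_top : ∀ B : Finset E, p B ≠ ⊤ → B.card = r
  exists_ne_top : ∃ B : Finset E, p B ≠ ⊤
  exchange : ∀ A B : Finset E, A.card = r → B.card = r → ∀ a ∈ A \ B,
    ∃ b ∈ B \ A,
      p (insert b (A.erase a)) + p (insert a (B.erase b)) ≤ p A + p B

namespace ValuatedMatroid

variable {E : Type*} [DecidableEq E] [Fintype E] {r : ℕ}

/-- The shifted valuation `p_w(B) = p(B) − ∑_{e ∈ B} w_e`. -/
noncomputable def pw (M : ValuatedMatroid E r) (w : E → ℝ) (B : Finset E) : WithTop ℝ :=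
  M.p B + ((-(∑ e ∈ B, w e) : ℝ) : WithTop ℝ)

/-- The minimum of `p_w` over all subsets of `E` (equivalently over all `r`-subsets,
since `p` is `∞` elsewhere). -/
noncomputable def minVal (M : ValuatedMatroid E r) (w : E → ℝ) : WithTop ℝ :=
  (Finset.univ : Finset E).powerset.inf (M.pw w)

/-- `B` is a basis of the initial matroid `in_w(M)`: an `r`-subset minimizing `p_w`. -/
def IsInitBasis (M : ValuatedMatroid E r) (w : E → ℝ) (B : Finset E) : Prop :=
  B.card = r ∧ M.pw w B = M.minVal w

end ValuatedMatroid

open ValuatedMatroid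

/-- **Initial collections of valuated matroids are matroids.**  For a valuated matroid
`M = (E, p)` of rank `r` and `w ∈ ℝ^E`, the collection of `r`-subsets `B` minimizing
`p(B) − ∑_{e ∈ B} w_e` is nonempty and satisfies the basis exchange axiom; that is, it
is the set of bases of a matroid of rank `r` on `E`. -/
theorem initBases_nonempty_and_exchange {E : Type*} [DecidableEq E] [Fintype E] {r : ℕ}
    (M : ValuatedMatroid E r) (w : E → ℝ) :
    (∃ B : Finset E, M.IsInitBasis w B) ∧
    ∀ A B : Finset E, M.IsInitBasis w A → M.IsInitBasis w B → ∀ a ∈ A \ B,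
      ∃ b ∈ B \ A, M.IsInitBasis w (insert b (A.erase a)) := by
  classical
  obtain ⟨B₁, hB₁⟩ := M.exists_ne_top
  have hmin_le : ∀ B : Finset E, M.minVal w ≤ M.pw w B := fun B =>
    Finset.inf_le (Finset.mem_powerset.2 (Finset.subset_univ B))
  have hne : M.minVal w ≠ ⊤ := by
    intro h
    have h2 := hmin_le B₁
    rw [h, top_le_iff] at h2
    exact hB₁ (by simpa [ValuatedMatroid.pw, WithTop.add_eq_top] using h2)
  obtain ⟨B₀, -, hB₀⟩ := Finset.exists_mem_eq_inf ((Finset.univ : Finset E).powerset)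
    ⟨∅, Finset.mem_powerset.2 (Finset.empty_subset _)⟩ (M.pw w)
  have hpB₀ : M.p B₀ ≠ ⊤ := by
    intro h
    apply hne
    rw [ValuatedMatroid.minVal, hB₀]
    simp [ValuatedMatroid.pw, h]
  refine ⟨⟨B₀, M.card_of_ne_top B₀ hpB₀, hB₀.symm⟩, ?_⟩
  rintro A B ⟨hAcard, hA⟩ ⟨hBcard, hB⟩ a ha
  obtain ⟨b, hb, hex⟩ := M.exchange A B hAcard hBcard a ha
  rw [Finset.mem_sdiff] at ha hb
  set A' := insert b (A.erase a) with hA'def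
  set B' := insert a (B.erase b) with hB'def
  have hbA' : b ∉ A.erase a := fun h => hb.2 (Finset.mem_of_mem_erase h)
  have haB' : a ∉ B.erase b := fun h => ha.2 (Finset.mem_of_mem_erase h)
  have hrpos : 1 ≤ r := hAcard ▸ Finset.card_pos.2 ⟨a, ha.1⟩
  have hA'card : A'.card = r := by
    rw [hA'def, Finset.card_insert_of_notMem hbA', Finset.card_erase_of_mem ha.1, hAcard]
    omega
  have hsA' : ∑ e ∈ A', w e = ∑ e ∈ A, w e - w a + w b := by
    rw [hA'def, Finset.sum_insert hbA', Finset.sum_erase_eq_sub ha.1]; ring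
  have hsB' : ∑ e ∈ B', w e = ∑ e ∈ B, w e - w b + w a := by
    rw [hB'def, Finset.sum_insert haB', Finset.sum_erase_eq_sub hb.1]; ring
  have e1 : ∀ x y : WithTop ℝ, ∀ s t : ℝ,
      (x + (s : WithTop ℝ)) + (y + (t : WithTop ℝ)) = (x + y) + (((s + t : ℝ)) : WithTop ℝ) := by
    intro x y s t
    rw [WithTop.coe_add]
    exact add_add_add_comm x s y t
  have hcomb : M.pw w A' + M.pw w B' ≤ M.pw w A + M.pw w B := by
    unfold ValuatedMatroid.pw
    rw [e1, e1, hsA', hsB']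
    have h3 : (-(∑ e ∈ A, w e - w a + w b) + -(∑ e ∈ B, w e - w b + w a) : ℝ)
        = (-(∑ e ∈ A, w e) + -(∑ e ∈ B, w e)) := by ring
    rw [h3]
    exact add_le_add hex (le_refl _)
  rw [hA, hB] at hcomb
  obtain ⟨m, hm⟩ := WithTop.ne_top_iff_exists.1 hne
  rw [← hm] at hcomb
  have hmm : ((m : WithTop ℝ) + m) ≠ ⊤ := by
    rw [← WithTop.coe_add]; exact WithTop.coe_ne_top
  have hA'ne : M.pw w A' ≠ ⊤ := by
    intro h; rw [h, top_add] at hcomb; exact hmm (top_le_iff.1 hcomb)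
  have hB'ne : M.pw w B' ≠ ⊤ := by
    intro h; rw [h, add_top] at hcomb; exact hmm (top_le_iff.1 hcomb)
  obtain ⟨y, hy⟩ := WithTop.ne_top_iff_exists.1 hA'ne
  obtain ⟨z, hz⟩ := WithTop.ne_top_iff_exists.1 hB'ne
  have hy' : (m : WithTop ℝ) ≤ (y : WithTop ℝ) := by rw [hm, hy]; exact hmin_le A'
  have hz' : (m : WithTop ℝ) ≤ (z : WithTop ℝ) := by rw [hm, hz]; exact hmin_le B'
  rw [← hy, ← hz] at hcomb
  have hyz : y + z ≤ m + m := by exact_mod_cast hcomb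
  have hym : m ≤ y := by exact_mod_cast hy'
  have hzm : m ≤ z := by exact_mod_cast hz'
  have : y = m := by linarith
  exact ⟨b, Finset.mem_sdiff.2 hb, hA'card, by rw [← hy, this, hm]⟩
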